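/- Let Z be a complex vector space with a conjugate-linear involution z ↦ z* and a convex cone Z⁺ of selfadjoint elements that is strict (Z⁺ ∩ −Z⁺ = {0}), endowed with a Hausdorff locally convex topology under which the involution is continuous and whose topology is generated by a family of increasing seminorms, but with Z⁺ not assumed closed. Then the closure cl(Z⁺) of Z⁺ is again a convex cone, it consists of selfadjoint elements, it is strict (cl(Z⁺) ∩ −cl(Z⁺) = {0}), and every continuous seminorm on Z that is increasing with respect to Z⁺ is increasing with respect to cl(Z⁺); consequently (Z, cl(Z⁺)) is a topologically ordered *-space. -/

import Mathlib

open scoped ComplexConjugate Topology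

/-- The data of an ordered `*`-space structure on a complex vector space `Z`:
a conjugate-linear involution and a strict convex cone of selfadjoint elements. -/
structure OrderedStarData (Z : Type*) [AddCommGroup Z] [Module ℂ Z] where
  star : Z → Z
  star_add : ∀ x y : Z, star (x + y) = star x + star y
  star_smul : ∀ (c : ℂ) (x : Z), star (c • x) = (starRingEnd ℂ) c • star x
  star_star : ∀ x : Z, star (star x) = x
  cone : Set Z
  cone_zero : (0 : Z) ∈ cone
  cone_add : ∀ x ∈ cone, ∀ y ∈ cone, x + y ∈ cone
  cone_smul : ∀ r : ℝ, 0 ≤ r → ∀ x ∈ cone, (r : ℂ) • x ∈ cone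
  cone_strict : ∀ x ∈ cone, -x ∈ cone → x = 0
  cone_star : ∀ x ∈ cone, star x = x

namespace OrderedStarData

variable {Z : Type*} [AddCommGroup Z] [Module ℂ Z]

/-- A seminorm is increasing when `0 ≤ x ≤ y` implies `p x ≤ p y`. -/
def Increasing (D : OrderedStarData Z) (p : Seminorm ℂ Z) : Prop :=
  ∀ x y : Z, x ∈ D.cone → y - x ∈ D.cone → p x ≤ p y

/-- A `*`-seminorm: `p (z*) = p z`. -/
def StarSeminorm (D : OrderedStarData Z) (p : Seminorm ℂ Z) : Prop :=
  ∀ z : Z, p (D.star z) = p z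

end OrderedStarData

/-- A topologically ordered `*`-space: an ordered `*`-space with a Hausdorff locally convex
topology generated by a family of increasing seminorms, continuous involution and closed cone. -/
structure TopOrderedStarSpace (Z : Type*) [AddCommGroup Z] [Module ℂ Z]
    [TopologicalSpace Z] extends OrderedStarData Z where
  t2 : T2Space Z
  star_continuous : Continuous star
  cone_closed : IsClosed cone
  seminorms_generate : ∃ (ι : Type) (hι : Nonempty ι) (q : ι → Seminorm ℂ Z),
      (∀ i, ∀ x y : Z, x ∈ cone → y - x ∈ cone → q i x ≤ q i y) ∧
      (letI := hι; WithSeminorms q)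

namespace TopOrderedStarSpace

variable {Z : Type*} [AddCommGroup Z] [Module ℂ Z] [TopologicalSpace Z]

/-- Membership in `S_*(Z)`, the set of continuous increasing `*`-seminorms. -/
def MemSStar (D : TopOrderedStarSpace Z) (p : Seminorm ℂ Z) : Prop :=
  Continuous ⇑p ∧ D.toOrderedStarData.Increasing p ∧ D.toOrderedStarData.StarSeminorm p

end TopOrderedStarSpace

/-- The topology of `Z` is generated by the family of seminorms `S`. -/
def GeneratesTopology {Z : Type*} [AddCommGroup Z] [Module ℂ Z] [TopologicalSpace Z]
    (S : Set (Seminorm ℂ Z)) : Prop :=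
  ∃ h : Nonempty ↥S, letI := h; WithSeminorms (fun p : ↥S => (p : Seminorm ℂ Z))

/-- A `Z`-valued gramian (vector valued inner product) on `E`, making `E` a VE-space over `Z`. -/
structure Gramian {Z : Type*} [AddCommGroup Z] [Module ℂ Z] (D : OrderedStarData Z)
    (E : Type*) [AddCommGroup E] [Module ℂ E] where
  inner : E → E → Z
  inner_self_mem : ∀ x : E, inner x x ∈ D.cone
  inner_self_eq_zero : ∀ x : E, inner x x = 0 → x = 0
  inner_herm : ∀ x y : E, inner x y = D.star (inner y x)
  inner_add_right : ∀ x y₁ y₂ : E, inner x (y₁ + y₂) = inner x y₁ + inner x y₂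
  inner_smul_right : ∀ (a : ℂ) (x y : E), inner x (a • y) = a • inner x y

namespace Gramian

variable {Z : Type*} [AddCommGroup Z] [Module ℂ Z] {D : OrderedStarData Z}
  {E : Type*} [AddCommGroup E] [Module ℂ E]
  {F : Type*} [AddCommGroup F] [Module ℂ F]

/-- The seminorm `p̃ x = p ([x,x])^{1/2}` induced on a VE-space by a seminorm on `Z`. -/
noncomputable def tilde (B : Gramian D E) (p : Seminorm ℂ Z) (x : E) : ℝ :=
  Real.sqrt (p (B.inner x x))

/-- `S` is an adjoint of `T` : `[Tx, y] = [x, Sy]`. -/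
def IsAdjoint (BE : Gramian D E) (BF : Gramian D F) (T : E →ₗ[ℂ] F) (S : F →ₗ[ℂ] E) : Prop :=
  ∀ (x : E) (y : F), BF.inner (T x) y = BE.inner x (S y)

/-- `T` is adjointable. -/
def Adjointable (BE : Gramian D E) (BF : Gramian D F) (T : E →ₗ[ℂ] F) : Prop :=
  ∃ S : F →ₗ[ℂ] E, BE.IsAdjoint BF T S

/-- `T` is bounded for the seminorm `p` : `p̃ (Tx) ≤ C p̃ x`. -/
def BoundedFor (BE : Gramian D E) (BF : Gramian D F) (T : E →ₗ[ℂ] F) (p : Seminorm ℂ Z) : Prop :=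
  ∃ C : ℝ, 0 ≤ C ∧ ∀ x : E, BF.tilde p (T x) ≤ C * BE.tilde p x

/-- The operator seminorm `p̄ T`, the infimum of the admissible bounds. -/
noncomputable def opSeminorm (BE : Gramian D E) (BF : Gramian D F) (T : E →ₗ[ℂ] F)
    (p : Seminorm ℂ Z) : ℝ :=
  sInf {C : ℝ | 0 ≤ C ∧ ∀ x : E, BF.tilde p (T x) ≤ C * BE.tilde p x}

/-- The topology of `E` is the one of a topological VE-space: it is generated by the
seminorms `p̃` for `p ∈ S`. -/
def IsVETopology [TopologicalSpace E] (B : Gramian D E) (S : Set (Seminorm ℂ Z)) : Prop :=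
  ∃ h : Nonempty ↥S, letI := h;
    ∃ q : ↥S → Seminorm ℂ E, (∀ (p : ↥S) (x : E), q p x = B.tilde p.1 x) ∧ WithSeminorms q

end Gramian

/-- A barrel: a closed, absorbent, balanced, convex set. -/
def IsBarrel {E : Type*} [AddCommGroup E] [Module ℂ E] [TopologicalSpace E] (s : Set E) : Prop :=
  IsClosed s ∧ Absorbent ℂ s ∧ Balanced ℂ s ∧ Convex ℝ s

/-- A (complex) topological vector space is barrelled if every barrel is a neighbourhood of `0`. -/
def BarrelledSp (E : Type*) [AddCommGroup E] [Module ℂ E] [TopologicalSpace E] : Prop :=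
  ∀ s : Set E, IsBarrel s → s ∈ 𝓝 (0 : E)

/-- A barrel with respect to the topology of a norm function `N`. -/
def IsBarrelWrtNorm {V : Type*} [AddCommGroup V] [Module ℂ V] (N : V → ℝ) (s : Set V) : Prop :=
  (∀ x : V, (∀ ε : ℝ, 0 < ε → ∃ y ∈ s, N (x - y) < ε) → x ∈ s) ∧
  Absorbent ℂ s ∧ Balanced ℂ s ∧ Convex ℝ s

/-- Barrelledness with respect to the topology of a norm function `N`. -/
def BarrelledWrtNorm {V : Type*} [AddCommGroup V] [Module ℂ V] (N : V → ℝ) : Prop :=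
  ∀ s : Set V, IsBarrelWrtNorm N s → ∃ ε : ℝ, 0 < ε ∧ ∀ x : V, N x < ε → x ∈ s

/-- The kernel of a seminorm, as a submodule. -/
def semKer {Z : Type*} [AddCommGroup Z] [Module ℂ Z] (p : Seminorm ℂ Z) : Submodule ℂ Z where
  carrier := {z | p z = 0}
  add_mem' := by
    intro a b ha hb
    simp only [Set.mem_setOf_eq] at ha hb ⊢
    exact le_antisymm ((map_add_le_add p a b).trans (by simp [ha, hb])) (apply_nonneg p _)
  zero_mem' := map_zero p
  smul_mem' := by
    intro c x hx
    simp only [Set.mem_setOf_eq] at hx ⊢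
    rw [map_smul_eq_mul, hx, mul_zero]

/-- Passing to the closure of the (not necessarily closed) cone of a would-be
topologically ordered `*`-space yields a topologically ordered `*`-space. -/
theorem statement0 {Z : Type*} [AddCommGroup Z] [Module ℂ Z] [TopologicalSpace Z]
    (st : Z → Z)
    (st_add : ∀ x y : Z, st (x + y) = st x + st y)
    (st_smul : ∀ (c : ℂ) (x : Z), st (c • x) = (starRingEnd ℂ) c • st x)
    (st_st : ∀ x : Z, st (st x) = x)
    (C : Set Z)
    (hC0 : (0 : Z) ∈ C)
    (hCadd : ∀ x ∈ C, ∀ y ∈ C, x + y ∈ C)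
    (hCsmul : ∀ r : ℝ, 0 ≤ r → ∀ x ∈ C, (r : ℂ) • x ∈ C)
    (hCstrict : ∀ x ∈ C, -x ∈ C → x = 0)
    (hCst : ∀ x ∈ C, st x = x)
    (ht2 : T2Space Z)
    (hstc : Continuous st)
    (hgen : ∃ (ι : Type) (hι : Nonempty ι) (q : ι → Seminorm ℂ Z),
      (∀ i, ∀ x ∈ C, ∀ y ∈ C, q i x ≤ q i (x + y)) ∧ (letI := hι; WithSeminorms q)) :
    (∀ x ∈ closure C, ∀ y ∈ closure C, x + y ∈ closure C) ∧
    (∀ r : ℝ, 0 ≤ r → ∀ x ∈ closure C, (r : ℂ) • x ∈ closure C) ∧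
    (∀ x ∈ closure C, st x = x) ∧
    (∀ x ∈ closure C, -x ∈ closure C → x = 0) ∧
    (∀ p : Seminorm ℂ Z, Continuous ⇑p → (∀ x ∈ C, ∀ y ∈ C, p x ≤ p (x + y)) →
      ∀ x ∈ closure C, ∀ y ∈ closure C, p x ≤ p (x + y)) ∧
    (∃ D : TopOrderedStarSpace Z, D.star = st ∧ D.cone = closure C) := by

  obtain ⟨ι, hι, q, hinc, hws⟩ := hgen
  haveI := hι
  haveI := ht2
  haveI : IsTopologicalAddGroup Z := hws.topologicalAddGroup
  haveI : ContinuousSMul ℂ Z := hws.continuousSMul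
  have hadd : ∀ x ∈ closure C, ∀ y ∈ closure C, x + y ∈ closure C := fun x hx y hy =>
    map_mem_closure₂ continuous_add hx hy hCadd
  have hsmul : ∀ r : ℝ, 0 ≤ r → ∀ x ∈ closure C, (r : ℂ) • x ∈ closure C := fun r hr x hx =>
    map_mem_closure (continuous_const_smul _) hx (hCsmul r hr)
  have hstcl : ∀ x ∈ closure C, st x = x := by
    intro x hx
    have hclosed : IsClosed {z : Z | st z = z} := isClosed_eq hstc continuous_id
    exact closure_minimal (fun z hz => hCst z hz) hclosed hx
  have hincr : ∀ p : Seminorm ℂ Z, Continuous ⇑p → (∀ x ∈ C, ∀ y ∈ C, p x ≤ p (x + y)) →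
      ∀ x ∈ closure C, ∀ y ∈ closure C, p x ≤ p (x + y) := by
    intro p hp h x hx y hy
    have hclosed : IsClosed {z : Z × Z | p z.1 ≤ p (z.1 + z.2)} :=
      isClosed_le (hp.comp continuous_fst) (hp.comp continuous_add)
    have hsub : closure C ×ˢ closure C ⊆ {z : Z × Z | p z.1 ≤ p (z.1 + z.2)} := by
      rw [← closure_prod_eq]
      exact closure_minimal (fun z hz => h z.1 hz.1 z.2 hz.2) hclosed
    exact hsub (Set.mk_mem_prod hx hy)
  have hstrict : ∀ x ∈ closure C, -x ∈ closure C → x = 0 := by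
    intro x hx hnx
    by_contra hne
    obtain ⟨i, hqi⟩ := hws.separating_of_T1 x hne
    have hle := hincr (q i) (hws.continuous_seminorm i) (hinc i) x hx (-x) hnx
    rw [add_neg_cancel, map_zero] at hle
    exact hqi (le_antisymm hle (apply_nonneg _ _))
  refine ⟨hadd, hsmul, hstcl, hstrict, hincr,
    ⟨{ star := st, star_add := st_add, star_smul := st_smul, star_star := st_st,
       cone := closure C,
       cone_zero := subset_closure hC0,
       cone_add := hadd,
       cone_smul := hsmul,
       cone_strict := hstrict,
       cone_star := hstcl,
       t2 := ht2,
       star_continuous := hstc,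
       cone_closed := isClosed_closure,
       seminorms_generate := ⟨ι, hι, q, fun i x y hx hyx => ?_, hws⟩ }, rfl, rfl⟩⟩
  have := hincr (q i) (hws.continuous_seminorm i) (hinc i) x hx (y - x) hyx
  rwa [add_sub_cancel] at this
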